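/- The composite NSA iterates satisfy lim_{k→∞} k²·(F(x_k) − F*) = 0. -/

import Mathlib

open scoped RealInnerProductSpace
open Filter

section NSAAux

variable {E : Type*} [NormedAddCommGroup E] [InnerProductSpace ℝ E] [CompleteSpace E]

lemma fderiv_inner_grad (f : E → ℝ) (hdiff : Differentiable ℝ f) (a v : E) :
    fderiv ℝ f a v = ⟪gradient f a, v⟫ := by
  have h := (hdiff a).hasGradientAt
  have h2 := h.hasFDerivAt
  rw [h2.fderiv, InnerProductSpace.toDual_apply_apply]

lemma hasDerivAt_line (f : E → ℝ) (hdiff : Differentiable ℝ f) (a v : E) (t : ℝ) :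
    HasDerivAt (fun s : ℝ => f (a + s • v)) ⟪gradient f (a + t • v), v⟫ t := by
  have h1 : HasDerivAt (fun s : ℝ => a + s • v) v t := by
    simpa using ((hasDerivAt_id t).smul_const v).const_add a
  have h2 := (hdiff (a + t • v)).hasFDerivAt
  have := h2.comp_hasDerivAt t h1
  rw [fderiv_inner_grad f hdiff] at this
  exact this

/-- Convex gradient inequality. -/
lemma grad_convex_ineq (f : E → ℝ) (hconv : ConvexOn ℝ Set.univ f)
    (hdiff : Differentiable ℝ f) (a u : E) :
    f a + ⟪gradient f a, u - a⟫ ≤ f u := by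
  set φ : ℝ → ℝ := fun s => f (a + s • (u - a)) with hφ
  have hconvφ : ConvexOn ℝ Set.univ φ := by
    have := hconv.comp_affineMap (AffineMap.lineMap a u : ℝ →ᵃ[ℝ] E)
    rw [Set.preimage_univ] at this
    have hfun : φ = f ∘ ⇑(AffineMap.lineMap a u : ℝ →ᵃ[ℝ] E) := by
      funext s
      simp [hφ, AffineMap.lineMap_apply, Function.comp]
      congr 1
      module
    rw [hfun]; exact this
  have hd : HasDerivAt φ ⟪gradient f (a + (0:ℝ) • (u - a)), u - a⟫ 0 :=
    hasDerivAt_line f hdiff a (u - a) 0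
  have hslope := hconvφ.le_slope_of_hasDerivAt (Set.mem_univ (0:ℝ)) (Set.mem_univ (1:ℝ))
    one_pos hd
  have h0 : φ 0 = f a := by simp [hφ]
  have h1 : φ 1 = f u := by simp [hφ]
  rw [slope_def_field, h0, h1] at hslope
  simp at hslope
  simp only [fderiv_inner_grad f hdiff] at hslope
  linarith [inner_sub_right (𝕜 := ℝ) (gradient f a) u a]

/-- Descent lemma. -/
lemma descent_lemma (f : E → ℝ) (hdiff : Differentiable ℝ f) (L : ℝ) (hL : 0 < L)
    (hlip : ∀ x x' : E, ‖gradient f x - gradient f x'‖ ≤ L * ‖x - x'‖) (a b : E) :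
    f b ≤ f a + ⟪gradient f a, b - a⟫ + L / 2 * ‖b - a‖ ^ 2 := by
  set v := b - a with hv
  set ψ : ℝ → ℝ := fun t => f (a + t • v) - t * ⟪gradient f a, v⟫ - L * t ^ 2 * ‖v‖ ^ 2 / 2
    with hψ
  have hder : ∀ t : ℝ, HasDerivAt ψ
      (⟪gradient f (a + t • v), v⟫ - ⟪gradient f a, v⟫ - L * t * ‖v‖ ^ 2) t := by
    intro t
    have h1 := hasDerivAt_line f hdiff a v t
    have h2 : HasDerivAt (fun t : ℝ => t * ⟪gradient f a, v⟫) ⟪gradient f a, v⟫ t := by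
      simpa using (hasDerivAt_id t).mul_const ⟪gradient f a, v⟫
    have h3 : HasDerivAt (fun t : ℝ => L * t ^ 2 * ‖v‖ ^ 2 / 2) (L * t * ‖v‖ ^ 2) t := by
      have : HasDerivAt (fun t : ℝ => t ^ 2) (2 * t) t := by
        simpa using hasDerivAt_pow 2 t
      have := ((this.const_mul L).mul_const (‖v‖ ^ 2)).div_const 2
      exact this.congr_deriv (by ring)
    exact (h1.sub h2).sub h3
  have hanti : AntitoneOn ψ (Set.Icc 0 1) := by
    apply antitoneOn_of_deriv_nonpos (convex_Icc 0 1)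
    · exact fun t _ => ((hder t).continuousAt).continuousWithinAt
    · exact fun t _ => ((hder t).differentiableAt).differentiableWithinAt
    · intro t ht
      rw [interior_Icc] at ht
      rw [(hder t).deriv]
      have hb : ⟪gradient f (a + t • v) - gradient f a, v⟫ ≤ L * t * ‖v‖ ^ 2 := by
        calc ⟪gradient f (a + t • v) - gradient f a, v⟫
            ≤ ‖gradient f (a + t • v) - gradient f a‖ * ‖v‖ := real_inner_le_norm _ _
          _ ≤ (L * ‖(a + t • v) - a‖) * ‖v‖ := by
              apply mul_le_mul_of_nonneg_right (hlip _ _) (norm_nonneg _)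
          _ = L * t * ‖v‖ ^ 2 := by
              rw [show (a + t • v) - a = t • v by abel, norm_smul]
              simp [abs_of_pos ht.1]
              ring
      rw [inner_sub_left] at hb
      linarith
  have h01 := hanti (Set.mem_Icc.2 ⟨le_refl 0, zero_le_one⟩)
    (Set.mem_Icc.2 ⟨zero_le_one, le_refl 1⟩) zero_le_one
  have h0 : ψ 0 = f a := by simp [hψ]
  have h1 : ψ 1 = f b - ⟪gradient f a, v⟫ - L * ‖v‖ ^ 2 / 2 := by
    simp [hψ, hv]
  rw [h0, h1] at h01
  linarith

lemma prox_step (f h : E → ℝ) (hconvf : ConvexOn ℝ Set.univ f)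
    (hdiff : Differentiable ℝ f) (L : ℝ) (hL : 0 < L)
    (hlip : ∀ x x' : E, ‖gradient f x - gradient f x'‖ ≤ L * ‖x - x'‖)
    (a g xplus : E)
    (hxe : xplus = a - (1 / L) • gradient f a - (1 / L) • g)
    (hg : ∀ u, h xplus + ⟪g, u - xplus⟫ ≤ h u) (u : E) :
    f xplus + h xplus ≤ f u + h u + L / 2 * ‖a - u‖ ^ 2 - L / 2 * ‖xplus - u‖ ^ 2 := by
  have hd := descent_lemma f hdiff L hL hlip a xplus
  have hc := grad_convex_ineq f hconvf hdiff a u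
  have hh := hg u
  set G := gradient f a with hG
  have hkey : G + g = L • (a - xplus) := by
    rw [hxe]
    rw [show a - (a - (1 / L) • G - (1 / L) • g) = (1 / L) • G + (1 / L) • g by abel]
    rw [smul_add, smul_smul, smul_smul, mul_one_div, div_self hL.ne', one_smul, one_smul]
  -- inner product manipulations
  have h1 : ⟪G, xplus - a⟫ + ⟪G, a - u⟫ + ⟪g, xplus - u⟫ = L * ⟪a - xplus, xplus - u⟫ := by
    rw [← inner_add_right, show xplus - a + (a - u) = xplus - u by abel,
      ← inner_add_left, hkey, real_inner_smul_left]
  have h2 : ‖a - u‖ ^ 2 = ‖a - xplus‖ ^ 2 + 2 * ⟪a - xplus, xplus - u⟫ + ‖xplus - u‖ ^ 2 := by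
    have := norm_add_sq_real (a - xplus) (xplus - u)
    rw [show a - xplus + (xplus - u) = a - u by abel] at this
    linarith
  have h3 : ‖xplus - a‖ ^ 2 = ‖a - xplus‖ ^ 2 := by rw [norm_sub_rev]
  have hinner : ⟪g, u - xplus⟫ = - ⟪g, xplus - u⟫ := by
    rw [← inner_neg_right]; congr 1; abel
  rw [hinner] at hh
  have h4 : ⟪G, a - u⟫ = - ⟪G, u - a⟫ := by
    rw [← inner_neg_right]; congr 1; abel
  have h2' : L / 2 * ‖a - u‖ ^ 2 = L / 2 * ‖a - xplus‖ ^ 2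
      + L * ⟪a - xplus, xplus - u⟫ + L / 2 * ‖xplus - u‖ ^ 2 := by
    rw [h2]; ring
  have h3' : L / 2 * ‖xplus - a‖ ^ 2 = L / 2 * ‖a - xplus‖ ^ 2 := by rw [h3]
  linarith [hd, hc, hh, h1, h2', h3', h4]

lemma tendsto_sq_mul_of_summable {v : ℕ → ℝ} (hv0 : ∀ k, 0 ≤ v k)
    (hmono : ∀ k, v (k + 1) ≤ v k)
    (hsum : Summable (fun k : ℕ => (k : ℝ) * v k)) :
    Tendsto (fun k : ℕ => (k : ℝ) ^ 2 * v k) atTop (nhds 0) := by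
  have hanti : Antitone v := antitone_nat_of_succ_le hmono
  set S := ∑' k : ℕ, (k : ℝ) * v k with hS
  have hterm0 : ∀ j : ℕ, 0 ≤ (j : ℝ) * v j := fun j =>
    mul_nonneg (Nat.cast_nonneg j) (hv0 j)
  have hpartial : Tendsto (fun N : ℕ => ∑ j ∈ Finset.range N, (j : ℝ) * v j) atTop (nhds S) :=
    hsum.hasSum.tendsto_sum_nat
  have hhalf : Tendsto (fun k : ℕ => k / 2) atTop atTop := by
    apply tendsto_atTop.2
    intro b
    refine eventually_atTop.2 ⟨2 * b, fun k hk => ?_⟩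
    omega
  have hT : Tendsto (fun k : ℕ => 9 * (S - ∑ j ∈ Finset.range (k / 2), (j : ℝ) * v j))
      atTop (nhds 0) := by
    have h0 : Tendsto (fun k : ℕ => S - ∑ j ∈ Finset.range (k / 2), (j : ℝ) * v j)
        atTop (nhds (S - S)) := tendsto_const_nhds.sub (hpartial.comp hhalf)
    have := h0.const_mul (9 : ℝ)
    simpa using this
  apply squeeze_zero' (g := fun k : ℕ => 9 * (S - ∑ j ∈ Finset.range (k / 2), (j : ℝ) * v j))
    (Filter.Eventually.of_forall fun k => mul_nonneg (sq_nonneg _) (hv0 k)) ?_ hT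
  refine eventually_atTop.2 ⟨2, fun k hk => ?_⟩
  set m := k / 2 with hm
  have hm1 : 1 ≤ m := by omega
  have hkm : m ≤ k := by omega
  have hk3m : k ≤ 3 * m := by omega
  have hsum_lb : (m : ℝ) ^ 2 * v k ≤ ∑ j ∈ Finset.Ico m k, (j : ℝ) * v j := by
    have h1 : ∀ j ∈ Finset.Ico m k, (m : ℝ) * v k ≤ (j : ℝ) * v j := by
      intro j hj
      rw [Finset.mem_Ico] at hj
      have hvj : v k ≤ v j := hanti (le_of_lt hj.2)
      have hmj : (m : ℝ) ≤ (j : ℝ) := Nat.cast_le.2 hj.1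
      nlinarith [hv0 k, hv0 j, Nat.cast_nonneg (α := ℝ) m]
    have hcard := Finset.card_nsmul_le_sum (Finset.Ico m k) _ _ h1
    rw [Nat.card_Ico, nsmul_eq_mul] at hcard
    have hmk : (m : ℝ) ≤ ((k - m : ℕ) : ℝ) := by exact_mod_cast (by omega : m ≤ k - m)
    calc (m : ℝ) ^ 2 * v k = (m : ℝ) * ((m : ℝ) * v k) := by ring
      _ ≤ ((k - m : ℕ) : ℝ) * ((m : ℝ) * v k) := by
          apply mul_le_mul_of_nonneg_right hmk
            (mul_nonneg (Nat.cast_nonneg m) (hv0 k))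
      _ ≤ ∑ j ∈ Finset.Ico m k, (j : ℝ) * v j := hcard
  have hsum_ub : ∑ j ∈ Finset.Ico m k, (j : ℝ) * v j ≤
      S - ∑ j ∈ Finset.range m, (j : ℝ) * v j := by
    have h1 : ∑ j ∈ Finset.range m, (j : ℝ) * v j + ∑ j ∈ Finset.Ico m k, (j : ℝ) * v j
        = ∑ j ∈ Finset.range k, (j : ℝ) * v j := by
      simp only [Finset.range_eq_Ico]
      exact Finset.sum_Ico_consecutive _ (by omega) (by omega)
    have h2 : ∑ j ∈ Finset.range k, (j : ℝ) * v j ≤ S :=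
      Summable.sum_le_tsum _ (fun j _ => hterm0 j) hsum
    linarith
  have hk3m' : (k : ℝ) ≤ 3 * (m : ℝ) := by exact_mod_cast hk3m
  have hk2 : (k : ℝ) ^ 2 ≤ 9 * (m : ℝ) ^ 2 := by
    nlinarith [Nat.cast_nonneg (α := ℝ) k]
  calc (k : ℝ) ^ 2 * v k ≤ 9 * ((m : ℝ) ^ 2 * v k) := by
        have := mul_le_mul_of_nonneg_right hk2 (hv0 k); linarith
    _ ≤ 9 * (S - ∑ j ∈ Finset.range m, (j : ℝ) * v j) := by
        have := hsum_lb.trans hsum_ub; linarith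

end NSAAux

set_option maxHeartbeats 1000000 in
/-- The composite NSA iterates satisfy `k² (F(x_k) - F*) → 0`, where
`F = f + h` with `f` smooth convex and `h` convex. -/
theorem nsa_stmt_17 (n : ℕ) (hn : 1 ≤ n)
    (f : EuclideanSpace ℝ (Fin n) → ℝ)
    (hconvf : ConvexOn ℝ Set.univ f)
    (hdiff : Differentiable ℝ f)
    (L : ℝ) (hL : 0 < L)
    (hlip : ∀ x x' : EuclideanSpace ℝ (Fin n),
      ‖gradient f x - gradient f x'‖ ≤ L * ‖x - x'‖)
    (h : EuclideanSpace ℝ (Fin n) → ℝ)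
    (hconvh : ConvexOn ℝ Set.univ h)
    (xstar : EuclideanSpace ℝ (Fin n))
    (hmin : ∀ u, f xstar + h xstar ≤ f u + h u)
    (p : ℝ) (hp : 3 ≤ p)
    (η : ℝ) (hη : η = 1 / L)
    (α : ℕ → ℝ) (hα : ∀ k : ℕ, α k = p / (k + p))
    (x y z xp xpp gp gpp : ℕ → EuclideanSpace ℝ (Fin n))
    (hx0 : x 0 = z 0)
    (hy : ∀ k, y k = (1 - α k) • x k + α k • z k)
    (hxp : ∀ k, xp k = y k - η • gradient f (y k) - η • gp k)
    (hgp : ∀ k, ∀ u, h (xp k) + ⟪gp k, u - xp k⟫ ≤ h u)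
    (hxpp : ∀ k, xpp k = x k - η • gradient f (x k) - η • gpp k)
    (hgpp : ∀ k, ∀ u, h (xpp k) + ⟪gpp k, u - xpp k⟫ ≤ h u)
    (hx : ∀ k, x (k + 1) =
      if f (xp k) + h (xp k) ≤ f (xpp k) + h (xpp k) then xp k else xpp k)
    (hz : ∀ k, z (k + 1) = z k - (η / α k) • (gradient f (y k) + gp k)) :
    Filter.Tendsto
      (fun k : ℕ => (k : ℝ) ^ 2 * (f (x k) + h (x k) - (f xstar + h xstar)))
      Filter.atTop (nhds 0) := by
  subst hη
  set v : ℕ → ℝ := fun k => f (x k) + h (x k) - (f xstar + h xstar) with hv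
  set W : ℕ → ℝ := fun k => ‖z k - xstar‖ ^ 2 with hW
  clear_value v W
  have hp0 : (0:ℝ) < p := by linarith
  have hv0 : ∀ k, 0 ≤ v k := fun k => by
    simp only [hv]; have := hmin (x k); linarith
  -- step inequalities
  have hstep_p : ∀ k u, f (xp k) + h (xp k) ≤ f u + h u
      + L / 2 * ‖y k - u‖ ^ 2 - L / 2 * ‖xp k - u‖ ^ 2 := fun k u =>
    prox_step f h hconvf hdiff L hL hlip (y k) (gp k) (xp k) (hxp k) (hgp k) u
  have hstep_pp : ∀ k u, f (xpp k) + h (xpp k) ≤ f u + h u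
      + L / 2 * ‖x k - u‖ ^ 2 - L / 2 * ‖xpp k - u‖ ^ 2 := fun k u =>
    prox_step f h hconvf hdiff L hL hlip (x k) (gpp k) (xpp k) (hxpp k) (hgpp k) u
  -- monotonicity of v
  have hFpp : ∀ k, f (xpp k) + h (xpp k) ≤ f (x k) + h (x k) := by
    intro k
    have := hstep_pp k (x k)
    have h0 : ‖x k - x k‖ ^ 2 = 0 := by simp
    rw [h0] at this
    nlinarith [sq_nonneg ‖xpp k - x k‖, hL.le]
  have hmono : ∀ k, v (k + 1) ≤ v k := by
    intro k
    have h1 : f (x (k+1)) + h (x (k+1)) ≤ f (xpp k) + h (xpp k) := by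
      rw [hx k]; split_ifs with hif
      · exact hif
      · exact le_refl _
    simp only [hv]
    have := hFpp k
    linarith
  have hFp : ∀ k, f (x (k+1)) + h (x (k+1)) ≤ f (xp k) + h (xp k) := by
    intro k
    rw [hx k]; split_ifs with hif
    · exact le_refl _
    · linarith [lt_of_not_ge hif]
  -- main recursion
  have hkey : ∀ k : ℕ, ((k:ℝ) + p) ^ 2 * v (k+1) + p ^ 2 * (L/2) * W (k+1)
      ≤ (k:ℝ) * ((k:ℝ) + p) * v k + p ^ 2 * (L/2) * W k := by
    intro k
    set q : ℝ := (k:ℝ) + p with hq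
    have hq0 : 0 < q := by positivity
    have hα' : α k = p / q := hα k
    have hα0 : 0 < α k := by rw [hα']; positivity
    have hα1 : α k ≤ 1 := by
      rw [hα', div_le_one hq0, hq]; linarith [Nat.cast_nonneg (α := ℝ) k]
    set u₀ : EuclideanSpace ℝ (Fin n) := (1 - α k) • x k + α k • xstar with hu₀
    have hFu : f u₀ + h u₀ ≤ (1 - α k) * (f (x k) + h (x k)) + α k * (f xstar + h xstar) := by
      have hf := hconvf.2 (Set.mem_univ (x k)) (Set.mem_univ xstar)
        (by linarith : (0:ℝ) ≤ 1 - α k) hα0.le (by ring)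
      have hh' := hconvh.2 (Set.mem_univ (x k)) (Set.mem_univ xstar)
        (by linarith : (0:ℝ) ≤ 1 - α k) hα0.le (by ring)
      simp only [smul_eq_mul] at hf hh'
      rw [hu₀]; nlinarith [hf, hh']
    have hyu : y k - u₀ = α k • (z k - xstar) := by
      rw [hy k, hu₀]; module
    have hxu : xp k - u₀ = α k • (z (k+1) - xstar) := by
      have e1 : α k • ((1/L / α k) • (gradient f (y k) + gp k))
          = (1/L) • (gradient f (y k) + gp k) := by
        rw [smul_smul, mul_div_cancel₀ _ hα0.ne']
      have e2 : α k • (z (k+1) - xstar)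
          = α k • z k - (1/L) • (gradient f (y k) + gp k) - α k • xstar := by
        rw [hz k, smul_sub, smul_sub, e1]
      rw [e2, hxp k, hy k, hu₀, smul_add]; module
    have hnyu : ‖y k - u₀‖ ^ 2 = (α k) ^ 2 * W k := by
      rw [hyu, norm_smul]; simp [hW, abs_of_pos hα0]; ring
    have hnxu : ‖xp k - u₀‖ ^ 2 = (α k) ^ 2 * W (k+1) := by
      rw [hxu, norm_smul]; simp [hW, abs_of_pos hα0]; ring
    have hmain := hstep_p k u₀
    rw [hnyu, hnxu] at hmain
    -- v (k+1) ≤ (1-αk) v k + L αk²/2 (W k - W (k+1))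
    have hX : v (k+1) ≤ (1 - α k) * v k
        + L * (α k)^2 / 2 * W k - L * (α k)^2 / 2 * W (k+1) := by
      have := hFp k
      simp only [hv]
      nlinarith [hmain, hFu]
    have := mul_le_mul_of_nonneg_left hX (sq_nonneg q)
    have hexp : q ^ 2 * ((1 - α k) * v k
        + L * (α k)^2 / 2 * W k - L * (α k)^2 / 2 * W (k+1))
        = (k:ℝ) * q * v k + p ^ 2 * (L/2) * W k - p ^ 2 * (L/2) * W (k+1) := by
      have eα2 : q^2 * (α k)^2 = p^2 := by rw [hα']; field_simp
      have eα1 : q^2 * (1 - α k) = (k:ℝ) * q := by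
        have h9 : q * (1 - α k) = q - p := by rw [hα']; field_simp
        have h10 : q - p = (k:ℝ) := by rw [hq]; ring
        calc q^2 * (1 - α k) = q * (q * (1 - α k)) := by ring
          _ = q * (q - p) := by rw [h9]
          _ = (k:ℝ) * q := by rw [h10]; ring
      linear_combination (v k) * eα1 + (L/2 * W k - L/2 * W (k+1)) * eα2
    rw [hexp] at this
    linarith
  -- Lyapunov telescoping
  set e : ℕ → ℝ := fun k => ((k:ℝ) - 1 + p) ^ 2 * v k + p ^ 2 * (L/2) * W k with he
  clear_value e
  have he0 : ∀ k, 0 ≤ e k := by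
    intro k
    have hA := mul_nonneg (sq_nonneg ((k:ℝ) - 1 + p)) (hv0 k)
    have hB0 : 0 ≤ W k := by rw [hW]; positivity
    have hB : 0 ≤ p ^ 2 * (L/2) * W k := mul_nonneg (by positivity) hB0
    simp only [he]
    exact add_nonneg hA hB
  have hdec : ∀ k : ℕ, e (k+1) + (k:ℝ) * v k ≤ e k := by
    intro k
    have h1 := hkey k
    have hcast : ((k+1 : ℕ):ℝ) - 1 + p = (k:ℝ) + p := by push_cast; ring
    simp only [he, hcast]
    have hcoef : (k:ℝ) * ((k:ℝ) + p) * v k + (k:ℝ) * v k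
        ≤ ((k:ℝ) - 1 + p) ^ 2 * v k := by
      nlinarith [mul_nonneg (mul_nonneg (Nat.cast_nonneg (α := ℝ) k)
        (by linarith : (0:ℝ) ≤ p - 3)) (hv0 k),
        mul_nonneg (sq_nonneg (p - 1)) (hv0 k)]
    linarith
  have hbound : ∀ N : ℕ, e N + ∑ j ∈ Finset.range N, (j:ℝ) * v j ≤ e 0 := by
    intro N
    induction N with
    | zero => simp
    | succ N ih =>
      rw [Finset.sum_range_succ]
      have := hdec N
      linarith
  have hsum : Summable (fun k : ℕ => (k:ℝ) * v k) := by
    apply summable_of_sum_range_le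
      (fun k => mul_nonneg (Nat.cast_nonneg k) (hv0 k))
    intro N
    have := hbound N
    have := he0 N
    linarith [hbound N, he0 N]
  have hfin := tendsto_sq_mul_of_summable hv0 hmono hsum
  rw [hv] at hfin
  exact hfin
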